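/- Let f be HK integrable on [a,b] with indefinite integral F(x) = ∫_a^x f. Then F is differentiable with F'(x) = f(x) at Lebesgue-almost every x in [a,b]. -/

import Mathlib

def IsTaggedPartition (a b : ℝ) (n : ℕ) (t x : ℕ → ℝ) : Prop :=
  t 0 = a ∧ t n = b ∧ (∀ j < n, t j < t (j + 1)) ∧
    ∀ j < n, x j ∈ Set.Icc (t j) (t (j + 1))

def IsFine (δ : ℝ → ℝ) (n : ℕ) (t x : ℕ → ℝ) : Prop :=
  ∀ j < n, t (j + 1) - t j < δ (x j)

def RiemannSum (g : ℝ → ℝ) (n : ℕ) (t x : ℕ → ℝ) : ℝ :=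
  ∑ j ∈ Finset.range n, g (x j) * (t (j + 1) - t j)

/-- `f` is Henstock–Kurzweil integrable on `[a,b]` with integral `α`. -/
def HKIntegral (a b : ℝ) (f : ℝ → ℝ) (α : ℝ) : Prop :=
  ∀ ε > 0, ∃ δ : ℝ → ℝ, (∀ y ∈ Set.Icc a b, 0 < δ y) ∧
    ∀ (n : ℕ) (t x : ℕ → ℝ), IsTaggedPartition a b n t x → IsFine δ n t x →
      |RiemannSum f n t x - α| < ε

namespace HKaux

open Set

/-- concatenated division points -/
def concT (n₁ : ℕ) (t₁ t₂ : ℕ → ℝ) : ℕ → ℝ := fun j => if j ≤ n₁ then t₁ j else t₂ (j - n₁)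

/-- concatenated tags -/
def concX (n₁ : ℕ) (x₁ x₂ : ℕ → ℝ) : ℕ → ℝ := fun j => if j < n₁ then x₁ j else x₂ (j - n₁)

theorem concat_partition {a c b : ℝ} {n₁ n₂ : ℕ} {t₁ x₁ t₂ x₂ : ℕ → ℝ}
    (h₁ : IsTaggedPartition a c n₁ t₁ x₁) (h₂ : IsTaggedPartition c b n₂ t₂ x₂) :
    IsTaggedPartition a b (n₁ + n₂) (concT n₁ t₁ t₂) (concX n₁ x₁ x₂) := by
  obtain ⟨h10, h1n, h1lt, h1x⟩ := h₁
  obtain ⟨h20, h2n, h2lt, h2x⟩ := h₂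
  have key : ∀ j, n₁ ≤ j → concT n₁ t₁ t₂ j = t₂ (j - n₁) := by
    intro j hj
    rcases eq_or_lt_of_le hj with h | h
    · simp only [concT, ← h, le_refl, if_pos, Nat.sub_self, h1n, h20]
    · simp only [concT, if_neg (by omega : ¬ j ≤ n₁)]
  have keyT : ∀ j, j ≤ n₁ → concT n₁ t₁ t₂ j = t₁ j := fun j hj => by
    simp only [concT, if_pos hj]
  refine ⟨?_, ?_, ?_, ?_⟩
  · rw [keyT 0 (Nat.zero_le _), h10]
  · rw [key _ (Nat.le_add_right _ _), Nat.add_sub_cancel_left, h2n]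
  · intro j hj
    by_cases hcase : j < n₁
    · rw [keyT j (le_of_lt hcase), keyT (j+1) hcase]
      exact h1lt j hcase
    · push_neg at hcase
      rw [key j hcase, key (j+1) (by omega)]
      have : j + 1 - n₁ = (j - n₁) + 1 := by omega
      rw [this]
      exact h2lt _ (by omega)
  · intro j hj
    by_cases hcase : j < n₁
    · rw [keyT j (le_of_lt hcase), keyT (j+1) hcase]
      simpa [concX, if_pos hcase] using h1x j hcase
    · push_neg at hcase
      rw [key j hcase, key (j+1) (by omega)]
      have h' : j + 1 - n₁ = (j - n₁) + 1 := by omega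
      rw [h']
      simpa [concX, if_neg (by omega : ¬ j < n₁)] using h2x _ (by omega : j - n₁ < n₂)

theorem concat_fine {c : ℝ} {δ : ℝ → ℝ} {n₁ n₂ : ℕ} {t₁ x₁ t₂ x₂ : ℕ → ℝ}
    (ht : t₁ n₁ = c) (ht2 : t₂ 0 = c)
    (h₁ : IsFine δ n₁ t₁ x₁) (h₂ : IsFine δ n₂ t₂ x₂) :
    IsFine δ (n₁ + n₂) (concT n₁ t₁ t₂) (concX n₁ x₁ x₂) := by
  have key : ∀ j, n₁ ≤ j → concT n₁ t₁ t₂ j = t₂ (j - n₁) := by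
    intro j hj
    rcases eq_or_lt_of_le hj with h | h
    · simp only [concT, ← h, le_refl, if_pos, Nat.sub_self, ht, ht2]
    · simp only [concT, if_neg (by omega : ¬ j ≤ n₁)]
  intro j hj
  by_cases hcase : j < n₁
  · simp only [concT, concX, if_pos hcase, if_pos (le_of_lt hcase),
      if_pos (by omega : j + 1 ≤ n₁)]
    exact h₁ j hcase
  · push_neg at hcase
    rw [key j hcase, key (j+1) (by omega)]
    have h' : j + 1 - n₁ = (j - n₁) + 1 := by omega
    rw [h']
    simpa [concX, if_neg (by omega : ¬ j < n₁)] using h₂ _ (by omega : j - n₁ < n₂)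

theorem concat_sum {c : ℝ} (g : ℝ → ℝ) {n₁ n₂ : ℕ} {t₁ x₁ t₂ x₂ : ℕ → ℝ}
    (ht : t₁ n₁ = c) (ht2 : t₂ 0 = c) :
    RiemannSum g (n₁ + n₂) (concT n₁ t₁ t₂) (concX n₁ x₁ x₂)
      = RiemannSum g n₁ t₁ x₁ + RiemannSum g n₂ t₂ x₂ := by
  have key : ∀ j, n₁ ≤ j → concT n₁ t₁ t₂ j = t₂ (j - n₁) := by
    intro j hj
    rcases eq_or_lt_of_le hj with h | h
    · simp only [concT, ← h, le_refl, if_pos, Nat.sub_self, ht, ht2]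
    · simp only [concT, if_neg (by omega : ¬ j ≤ n₁)]
  unfold RiemannSum
  rw [Finset.sum_range_add]
  congr 1
  · apply Finset.sum_congr rfl
    intro j hj
    rw [Finset.mem_range] at hj
    simp only [concT, concX, if_pos hj, if_pos (le_of_lt hj), if_pos (by omega : j + 1 ≤ n₁)]
  · apply Finset.sum_congr rfl
    intro j hj
    rw [Finset.mem_range] at hj
    rw [key (n₁ + j) (by omega), key (n₁ + j + 1) (by omega)]
    have e1 : n₁ + j - n₁ = j := by omega
    have e2 : n₁ + j + 1 - n₁ = j + 1 := by omega
    simp only [concX, if_neg (by omega : ¬ n₁ + j < n₁), e1, e2]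

/-- the trivial partition of `[u,u]` -/
theorem trivial_partition (u : ℝ) :
    IsTaggedPartition u u 0 (fun _ => u) (fun _ => u) :=
  ⟨rfl, rfl, fun j hj => by omega, fun j hj => by omega⟩

theorem trivial_fine (δ : ℝ → ℝ) (u : ℝ) : IsFine δ 0 (fun _ => u) (fun _ => u) :=
  fun j hj => by omega

theorem trivial_sum (g : ℝ → ℝ) (u : ℝ) : RiemannSum g 0 (fun _ => u) (fun _ => u) = 0 := by
  simp [RiemannSum]

/-- single-interval partition -/
def sT (u v : ℝ) : ℕ → ℝ := fun j => if j = 0 then u else v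

theorem single_partition {u v : ℝ} (huv : u < v) (τ : ℝ) (hτ : τ ∈ Icc u v) :
    IsTaggedPartition u v 1 (sT u v) (fun _ => τ) := by
  refine ⟨rfl, rfl, ?_, ?_⟩
  · intro j hj
    interval_cases j
    simpa [sT] using huv
  · intro j hj
    interval_cases j
    simpa [sT] using hτ

theorem single_fine {δ : ℝ → ℝ} {u v : ℝ} (τ : ℝ) (h : v - u < δ τ) :
    IsFine δ 1 (sT u v) (fun _ => τ) := by
  intro j hj
  interval_cases j
  simpa [sT] using h

theorem single_sum (g : ℝ → ℝ) (u v τ : ℝ) :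
    RiemannSum g 1 (sT u v) (fun _ => τ) = g τ * (v - u) := by
  simp [RiemannSum, sT]


theorem partition_mono {a b : ℝ} {n : ℕ} {t x : ℕ → ℝ} (h : IsTaggedPartition a b n t x) :
    ∀ {i j : ℕ}, i ≤ j → j ≤ n → t i ≤ t j := by
  intro i j hij hjn
  induction j with
  | zero => simp_all
  | succ k ih =>
    rcases Nat.eq_or_lt_of_le hij with h' | h'
    · rw [h']
    · exact le_trans (ih (by omega) (by omega)) (le_of_lt (h.2.2.1 k (by omega)))

/-- a partition of a degenerate interval has `n = 0`. -/
theorem degenerate_partition {a : ℝ} {n : ℕ} {t x : ℕ → ℝ}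
    (h : IsTaggedPartition a a n t x) : RiemannSum g n t x = 0 := by
  rcases Nat.eq_zero_or_pos n with h0 | h0
  · simp [RiemannSum, h0]
  · exfalso
    have h1 : t 0 < t 1 := h.2.2.1 0 h0
    have h2 : t 1 ≤ t n := partition_mono h (by omega) (by omega)
    rw [h.1, h.2.1] at *
    linarith

/-- Cousin's lemma: fine tagged partitions exist. -/
theorem cousin {a b : ℝ} (hab : a ≤ b) {δ : ℝ → ℝ} (hδ : ∀ y ∈ Icc a b, 0 < δ y) :
    ∃ n t x, IsTaggedPartition a b n t x ∧ IsFine δ n t x := by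
  set S : Set ℝ := {c | c ∈ Icc a b ∧ ∃ n t x, IsTaggedPartition a c n t x ∧ IsFine δ n t x}
    with hS
  have haS : a ∈ S := ⟨⟨le_refl a, hab⟩, 0, _, _, trivial_partition a, trivial_fine δ a⟩
  have hne : S.Nonempty := ⟨a, haS⟩
  have hbdd : BddAbove S := ⟨b, fun c hc => hc.1.2⟩
  set m := sSup S with hm
  have ham : a ≤ m := le_csSup hbdd haS
  have hmb : m ≤ b := csSup_le hne (fun c hc => hc.1.2)
  have hmI : m ∈ Icc a b := ⟨ham, hmb⟩
  have hδm : 0 < δ m := hδ m hmI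
  -- extension helper
  have ext : ∀ c ∈ S, ∀ d, c ≤ d → d ≤ b → d - c < δ m → m ∈ Icc c d → d ∈ S := by
    intro c hc d hcd hdb hfine hmcd
    rcases eq_or_lt_of_le hcd with h' | h'
    · rwa [← h']
    obtain ⟨⟨hac, _⟩, n, t, x, hp, hf⟩ := hc
    refine ⟨⟨le_trans hac hcd, hdb⟩, n + 1, _, _,
      concat_partition hp (single_partition h' m hmcd),
      concat_fine hp.2.1 rfl hf (single_fine m hfine)⟩
  have hmS : m ∈ S := by
    obtain ⟨c, hcS, hcm⟩ := exists_lt_of_lt_csSup hne (by linarith : m - δ m < m)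
    have hcm' : c ≤ m := le_csSup hbdd hcS
    exact ext c hcS m hcm' hmb (by linarith) ⟨hcm', le_refl m⟩
  have hmbeq : m = b := by
    by_contra hne'
    have hmb' : m < b := lt_of_le_of_ne hmb hne'
    set d := min b (m + δ m / 2) with hd
    have hmd : m < d := lt_min hmb' (by linarith)
    have hdS : d ∈ S := ext m hmS d (le_of_lt hmd) (min_le_left _ _)
      (by have := min_le_right b (m + δ m / 2); linarith) ⟨le_refl m, le_of_lt hmd⟩
    have := le_csSup hbdd hdS
    rw [← hm] at this
    linarith
  obtain ⟨_, n, t, x, hp, hf⟩ := hmS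
  exact ⟨n, t, x, hmbeq ▸ hp, hf⟩


theorem hk_degenerate {a α : ℝ} {f : ℝ → ℝ} (h : HKIntegral a a f α) : α = 0 := by
  by_contra hα
  obtain ⟨δ, hδ, hprop⟩ := h (|α|) (abs_pos.mpr hα)
  have := hprop 0 (fun _ => a) (fun _ => a) (trivial_partition a) (trivial_fine δ a)
  rw [trivial_sum] at this
  simp only [zero_sub, abs_neg] at this
  linarith

/-- The HK integral over a subinterval is the increment of `F`. -/
theorem sub_integral {a b u v : ℝ} {f F : ℝ → ℝ}
    (hF : ∀ x ∈ Icc a b, HKIntegral a x f (F x))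
    (hau : a ≤ u) (huv : u ≤ v) (hvb : v ≤ b) : HKIntegral u v f (F v - F u) := by
  intro ε hε
  obtain ⟨δ₁, hδ₁, hp₁⟩ := hF u ⟨hau, le_trans huv hvb⟩ (ε/2) (by linarith)
  obtain ⟨δ₂, hδ₂, hp₂⟩ := hF v ⟨le_trans hau huv, hvb⟩ (ε/2) (by linarith)
  refine ⟨δ₂, fun y hy => hδ₂ y ⟨le_trans hau hy.1, hy.2⟩, ?_⟩
  intro n t x hp hf
  -- get a fine partition of `[a,u]`
  obtain ⟨n', t', x', hp', hf'⟩ := cousin hau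
    (fun y hy => lt_min (hδ₁ y hy) (hδ₂ y ⟨hy.1, le_trans hy.2 huv⟩))
  have h1 : |RiemannSum f n' t' x' - F u| < ε/2 :=
    hp₁ n' t' x' hp' (fun j hj => lt_of_lt_of_le (hf' j hj) (min_le_left _ _))
  have hf'2 : IsFine δ₂ n' t' x' := fun j hj => lt_of_lt_of_le (hf' j hj) (min_le_right _ _)
  have h2 : |(RiemannSum f n' t' x' + RiemannSum f n t x) - F v| < ε/2 := by
    have := hp₂ (n' + n) _ _ (concat_partition hp' hp)
      (concat_fine hp'.2.1 hp.1 hf'2 hf)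
    rwa [concat_sum f hp'.2.1 hp.1] at this
  have : |RiemannSum f n t x - (F v - F u)| =
      |((RiemannSum f n' t' x' + RiemannSum f n t x) - F v) - (RiemannSum f n' t' x' - F u)| := by
    ring_nf
  rw [this]
  calc |((RiemannSum f n' t' x' + RiemannSum f n t x) - F v) - (RiemannSum f n' t' x' - F u)|
      ≤ |(RiemannSum f n' t' x' + RiemannSum f n t x) - F v| + |RiemannSum f n' t' x' - F u| :=
        abs_sub _ _
    _ < ε/2 + ε/2 := add_lt_add h2 h1
    _ = ε := by ring

/-- Approximating fine partitions on subintervals (fine w.r.t. a given gauge). -/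
theorem approx_partition {a b u v : ℝ} {f F : ℝ → ℝ} {δ : ℝ → ℝ}
    (hδ : ∀ y ∈ Icc a b, 0 < δ y)
    (hF : ∀ x ∈ Icc a b, HKIntegral a x f (F x))
    (hau : a ≤ u) (huv : u ≤ v) (hvb : v ≤ b) {η : ℝ} (hη : 0 < η) :
    ∃ n t x, IsTaggedPartition u v n t x ∧ IsFine δ n t x ∧
      |RiemannSum f n t x - (F v - F u)| < η := by
  obtain ⟨δ', hδ', hp'⟩ := sub_integral hF hau huv hvb η hη
  obtain ⟨n, t, x, hp, hf⟩ := cousin huv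
    (fun y hy => lt_min (hδ y ⟨le_trans hau hy.1, le_trans hy.2 hvb⟩) (hδ' y hy))
  exact ⟨n, t, x, hp, fun j hj => lt_of_lt_of_le (hf j hj) (min_le_left _ _),
    hp' n t x hp (fun j hj => lt_of_lt_of_le (hf j hj) (min_le_right _ _))⟩


/-- A chained, fine, partial system of tagged intervals inside `[·,b]`,
starting no earlier than `c`. Entries are `(u, v, x)`. -/
def SysOK (δ : ℝ → ℝ) (b : ℝ) : ℝ → List (ℝ × ℝ × ℝ) → Prop
  | _, [] => True
  | c, e :: L => c ≤ e.1 ∧ e.1 < e.2.1 ∧ e.2.2 ∈ Icc e.1 e.2.1 ∧ e.2.1 - e.1 < δ e.2.2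
      ∧ e.2.1 ≤ b ∧ SysOK δ b e.2.1 L

def sysTerm (f F : ℝ → ℝ) (e : ℝ × ℝ × ℝ) : ℝ := (F e.2.1 - F e.1) - f e.2.2 * (e.2.1 - e.1)

def SysSum (f F : ℝ → ℝ) (L : List (ℝ × ℝ × ℝ)) : ℝ := (L.map (sysTerm f F)).sum

theorem sysOK_mono {δ : ℝ → ℝ} {b c c' : ℝ} {L : List (ℝ × ℝ × ℝ)}
    (h : SysOK δ b c L) (hc : c' ≤ c) : SysOK δ b c' L := by
  cases L with
  | nil => trivial
  | cons e L => exact ⟨le_trans hc h.1, h.2⟩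

theorem sysOK_filter {δ : ℝ → ℝ} {b : ℝ} (p : ℝ × ℝ × ℝ → Bool) :
    ∀ {L : List (ℝ × ℝ × ℝ)} {c : ℝ}, SysOK δ b c L → SysOK δ b c (L.filter p) := by
  intro L
  induction L with
  | nil => intro c _; simp [SysOK]
  | cons e L ih =>
    intro c h
    obtain ⟨h1, h2, h3, h4, h5, h6⟩ := h
    rw [List.filter_cons]
    by_cases hp : p e
    · simp only [hp, if_pos]
      exact ⟨h1, h2, h3, h4, h5, ih h6⟩
    · simp only [hp, Bool.false_eq_true, if_neg, not_false_iff]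
      exact sysOK_mono (ih h6) (by linarith [h2.le])

/-- Build a fine partition of `[c,b]` whose Riemann sum is close to
`(F b - F c) - SysSum f F L`. -/
theorem buildP {a b : ℝ} {f F : ℝ → ℝ} {δ : ℝ → ℝ}
    (hδ : ∀ y ∈ Icc a b, 0 < δ y)
    (hF : ∀ x ∈ Icc a b, HKIntegral a x f (F x)) :
    ∀ (L : List (ℝ × ℝ × ℝ)) (c : ℝ), a ≤ c → c ≤ b → SysOK δ b c L → ∀ η > 0,
    ∃ n t x, IsTaggedPartition c b n t x ∧ IsFine δ n t x ∧
      |RiemannSum f n t x - ((F b - F c) - SysSum f F L)| < η := by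
  intro L
  induction L with
  | nil =>
    intro c hac hcb _ η hη
    obtain ⟨n, t, x, hp, hf, hest⟩ := approx_partition hδ hF hac hcb (le_refl b) hη
    exact ⟨n, t, x, hp, hf, by simpa [SysSum] using hest⟩
  | cons e L ih =>
    rintro c hac hcb ⟨h1, h2, h3, h4, h5, h6⟩ η hη
    obtain ⟨u, v, τ⟩ := e
    simp only at h1 h2 h3 h4 h5 h6
    -- gap partition on [c,u]
    obtain ⟨n₁, t₁, x₁, hp₁, hf₁, he₁⟩ :=
      approx_partition hδ hF hac h1 (by linarith) (by linarith : (0:ℝ) < η/2)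
    -- the distinguished interval [u,v]
    have hsp := single_partition h2 τ h3
    have hsf := single_fine (δ := δ) τ h4
    -- partition of [v,b] from ih
    obtain ⟨n₂, t₂, x₂, hp₂, hf₂, he₂⟩ := ih v (by linarith) h5 h6 (η/2) (by linarith)
    refine ⟨n₁ + 1 + n₂, _, _,
      concat_partition (concat_partition hp₁ hsp) hp₂,
      concat_fine (by rw [(concat_partition hp₁ hsp).2.1])
        hp₂.1 (concat_fine hp₁.2.1 rfl hf₁ hsf) hf₂, ?_⟩
    rw [concat_sum f (by rw [(concat_partition hp₁ hsp).2.1]) hp₂.1,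
      concat_sum f hp₁.2.1 rfl, single_sum]
    have hsum : SysSum f F ((u, v, τ) :: L)
        = ((F v - F u) - f τ * (v - u)) + SysSum f F L := by
      simp [SysSum, sysTerm]
    rw [hsum]
    have : RiemannSum f n₁ t₁ x₁ + f τ * (v - u) + RiemannSum f n₂ t₂ x₂ -
          (F b - F c - ((F v - F u - f τ * (v - u)) + SysSum f F L))
        = (RiemannSum f n₁ t₁ x₁ - (F u - F c))
          + (RiemannSum f n₂ t₂ x₂ - ((F b - F v) - SysSum f F L)) := by
      ring
    rw [this]
    calc |(RiemannSum f n₁ t₁ x₁ - (F u - F c))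
          + (RiemannSum f n₂ t₂ x₂ - ((F b - F v) - SysSum f F L))|
        ≤ |RiemannSum f n₁ t₁ x₁ - (F u - F c)|
          + |RiemannSum f n₂ t₂ x₂ - ((F b - F v) - SysSum f F L)| := abs_add_le _ _
      _ < η/2 + η/2 := add_lt_add he₁ he₂
      _ = η := by ring

/-- Saks–Henstock: the partial-system sum is controlled by the gauge tolerance. -/
theorem saks_henstock {a b ε : ℝ} {f F : ℝ → ℝ} {δ : ℝ → ℝ}
    (hab : a ≤ b) (hδ : ∀ y ∈ Icc a b, 0 < δ y)
    (hF : ∀ x ∈ Icc a b, HKIntegral a x f (F x))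
    (hδε : ∀ n t x, IsTaggedPartition a b n t x → IsFine δ n t x →
      |RiemannSum f n t x - F b| < ε)
    (L : List (ℝ × ℝ × ℝ)) (hL : SysOK δ b a L) : |SysSum f F L| ≤ ε := by
  have hFa : F a = 0 := hk_degenerate (hF a ⟨le_refl a, hab⟩)
  refine le_of_forall_pos_le_add ?_
  intro η hη
  obtain ⟨n, t, x, hp, hf, hest⟩ := buildP hδ hF L a (le_refl a) hab hL η hη
  have h1 := hδε n t x hp hf
  rw [hFa] at hest
  calc |SysSum f F L| = |(RiemannSum f n t x - F b)
        - (RiemannSum f n t x - ((F b - 0) - SysSum f F L))| := by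
          rw [← abs_neg (SysSum f F L)]; ring_nf
    _ ≤ |RiemannSum f n t x - F b|
        + |RiemannSum f n t x - ((F b - 0) - SysSum f F L)| := abs_sub _ _
    _ ≤ ε + η := add_le_add h1.le hest.le

theorem abs_map_sum_split (g : ℝ × ℝ × ℝ → ℝ) :
    ∀ L : List (ℝ × ℝ × ℝ), (L.map fun e => |g e|).sum
      = ((L.filter fun e => decide (0 ≤ g e)).map g).sum
        - ((L.filter fun e => !decide (0 ≤ g e)).map g).sum := by
  intro L
  induction L with
  | nil => simp
  | cons e L ih =>
    by_cases h : 0 ≤ g e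
    · simp only [List.map_cons, List.sum_cons, List.filter_cons, h, decide_true,
        decide_eq_true_eq, if_pos, abs_of_nonneg h, ih]
      simp [h]
      ring
    · simp only [List.map_cons, List.sum_cons, List.filter_cons,
        abs_of_neg (not_le.mp h), ih]
      simp [h]
      ring

/-- Saks–Henstock with absolute values. -/
theorem saks_henstock_abs {a b ε : ℝ} {f F : ℝ → ℝ} {δ : ℝ → ℝ}
    (hab : a ≤ b) (hδ : ∀ y ∈ Icc a b, 0 < δ y)
    (hF : ∀ x ∈ Icc a b, HKIntegral a x f (F x))
    (hδε : ∀ n t x, IsTaggedPartition a b n t x → IsFine δ n t x →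
      |RiemannSum f n t x - F b| < ε)
    (L : List (ℝ × ℝ × ℝ)) (hL : SysOK δ b a L) :
    (L.map fun e => |sysTerm f F e|).sum ≤ 2 * ε := by
  rw [abs_map_sum_split (sysTerm f F) L]
  have h1 := saks_henstock hab hδ hF hδε _ (sysOK_filter (fun e => decide (0 ≤ sysTerm f F e)) hL)
  have h2 := saks_henstock hab hδ hF hδε _ (sysOK_filter (fun e => !decide (0 ≤ sysTerm f F e)) hL)
  rw [abs_le] at h1 h2
  unfold SysSum at h1 h2
  linarith [h1.2, h2.1]

/-- A sorted disjoint family of good tagged intervals is a `SysOK` system. -/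
theorem sorted_to_sysOK {δ : ℝ → ℝ} {b : ℝ} :
    ∀ {L : List (ℝ × ℝ × ℝ)} {c : ℝ},
      (∀ e ∈ L, c ≤ e.1 ∧ e.1 < e.2.1 ∧ e.2.2 ∈ Icc e.1 e.2.1 ∧ e.2.1 - e.1 < δ e.2.2
        ∧ e.2.1 ≤ b) →
      L.Pairwise (fun e e' => e.2.1 ≤ e'.1) → SysOK δ b c L := by
  intro L
  induction L with
  | nil => intro c _ _; trivial
  | cons e L ih =>
    intro c hmem hpw
    obtain ⟨h1, h2, h3, h4, h5⟩ := hmem e List.mem_cons_self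
    rw [List.pairwise_cons] at hpw
    refine ⟨h1, h2, h3, h4, h5, ih ?_ hpw.2⟩
    intro e' he'
    exact ⟨hpw.1 e' he', (hmem e' (List.mem_cons_of_mem e he')).2⟩


theorem list_sum_le {α : Type*} (f g : α → ℝ) :
    ∀ L : List α, (∀ e ∈ L, f e ≤ g e) → (L.map f).sum ≤ (L.map g).sum := by
  intro L
  induction L with
  | nil => intro _; simp
  | cons e L ih =>
    intro h
    simp only [List.map_cons, List.sum_cons]
    exact add_le_add (h e List.mem_cons_self)
      (ih fun e' he' => h e' (List.mem_cons_of_mem e he'))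

open MeasureTheory
open scoped NNReal ENNReal

/-- The set of points where differentiability fails at scale `1/(k+1)`. -/
def Ek (a b : ℝ) (f F : ℝ → ℝ) (k : ℕ) : Set ℝ :=
  {x | x ∈ Icc a b ∧ ∀ r > 0, ∃ u v, a ≤ u ∧ u ≤ x ∧ x ≤ v ∧ v ≤ b ∧ u < v ∧ v - u ≤ r ∧
    (v - u) / (k + 1) ≤ |F v - F u - f x * (v - u)|}

theorem Ek_null {a b : ℝ} {f F : ℝ → ℝ} (hab : a ≤ b)
    (hF : ∀ x ∈ Icc a b, HKIntegral a x f (F x)) (k : ℕ) :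
    volume (Ek a b f F k) = 0 := by
  refine le_antisymm ?_ zero_le
  refine ENNReal.le_of_forall_pos_le_add ?_
  intro ε' hε' _
  rw [zero_add]
  have hε'R : (0:ℝ) < (ε' : ℝ) := hε'
  have hk1 : (0:ℝ) < (k:ℝ) + 1 := by positivity
  set ε₀ : ℝ := (ε' : ℝ) / (2 * ((k:ℝ) + 1)) with hε₀
  have hε₀pos : 0 < ε₀ := by positivity
  obtain ⟨δ, hδ, hδprop⟩ := hF b ⟨hab, le_refl b⟩ ε₀ hε₀pos
  -- the Vitali family of tagged intervals
  set T : Set (ℝ × ℝ × ℝ) := {e | e.2.2 ∈ Ek a b f F k ∧ a ≤ e.1 ∧ e.1 ≤ e.2.2 ∧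
    e.2.2 ≤ e.2.1 ∧ e.1 < e.2.1 ∧ e.2.1 ≤ b ∧ e.2.1 - e.1 < δ e.2.2 ∧
    (e.2.1 - e.1) / (k + 1) ≤ |F e.2.1 - F e.1 - f e.2.2 * (e.2.1 - e.1)|} with hT
  obtain ⟨U, hUT, hUc, hUd, hUcov⟩ := Vitali.exists_disjoint_covering_ae volume
    (Ek a b f F k) T 6 (fun e => e.2.1 - e.1) (fun e => e.2.2) (fun e => Icc e.1 e.2.1)
    (by
      rintro e heT y hy
      rw [Real.closedBall_eq_Icc]
      obtain ⟨-, -, h1, h2, -, -, -, -⟩ := heT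
      exact ⟨by linarith [hy.1, hy.2], by linarith [hy.1, hy.2]⟩)
    (by
      intro e heT
      rw [Real.volume_closedBall, Real.volume_Icc]
      have h5 : e.1 < e.2.1 := heT.2.2.2.2.1
      have : ((6 : ℝ≥0) : ℝ≥0∞) = ENNReal.ofReal 6 := by
        simp [ENNReal.ofReal]
      rw [this, ← ENNReal.ofReal_mul (by norm_num)]
      exact ENNReal.ofReal_le_ofReal (le_of_eq (by ring)))
    (by
      intro e heT
      have h5 : e.1 < e.2.1 := heT.2.2.2.2.1
      rw [interior_Icc]
      exact Set.nonempty_Ioo.mpr h5)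
    (fun e _ => isClosed_Icc)
    (by
      intro x hx ε hε
      have hxI : x ∈ Icc a b := hx.1
      have hδx : 0 < δ x := hδ x hxI
      obtain ⟨u, v, h1, h2, h3, h4, h5, h6, h7⟩ :=
        hx.2 (min ε (δ x / 2)) (lt_min hε (by linarith))
      refine ⟨(u, v, x), ⟨hx, h1, h2, h3, h5, h4, ?_, h7⟩,
        le_trans h6 (min_le_left _ _), rfl⟩
      calc v - u ≤ δ x / 2 := le_trans h6 (min_le_right _ _)
        _ < δ x := by linarith)
  -- bound the measure by the sum of lengths of the disjoint subfamily
  have hcover : volume (Ek a b f F k)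
      ≤ ∑' (e : ↥U), volume (Icc (e : ℝ × ℝ × ℝ).1 (e : ℝ × ℝ × ℝ).2.1) := by
    calc volume (Ek a b f F k)
        ≤ volume ((Ek a b f F k) \ (⋃ e ∈ U, Icc e.1 e.2.1))
          + volume (⋃ e ∈ U, Icc e.1 e.2.1) := by
          refine le_trans (measure_mono ?_) (measure_union_le _ _)
          intro y hy
          by_cases h : y ∈ ⋃ e ∈ U, Icc e.1 e.2.1
          · exact Or.inr h
          · exact Or.inl ⟨hy, h⟩
      _ = volume (⋃ e ∈ U, Icc e.1 e.2.1) := by rw [hUcov, zero_add]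
      _ ≤ ∑' (e : ↥U), volume (Icc (e : ℝ × ℝ × ℝ).1 (e : ℝ × ℝ × ℝ).2.1) :=
          measure_biUnion_le volume hUc _
  refine le_trans hcover ?_
  -- bound the tsum via finite subsums and Saks–Henstock
  rw [ENNReal.tsum_eq_iSup_sum]
  refine iSup_le ?_
  intro s
  -- pass to a real sum
  have hlen : ∀ i : ↥U, (0:ℝ) ≤ (i : ℝ × ℝ × ℝ).2.1 - (i : ℝ × ℝ × ℝ).1 := by
    intro i
    have := (hUT i.2).2.2.2.2.1
    linarith
  have hvol : ∀ i : ↥U, volume (Icc (i : ℝ × ℝ × ℝ).1 (i : ℝ × ℝ × ℝ).2.1)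
      = ENNReal.ofReal ((i : ℝ × ℝ × ℝ).2.1 - (i : ℝ × ℝ × ℝ).1) := fun i => Real.volume_Icc
  calc ∑ i ∈ s, volume (Icc (i : ℝ × ℝ × ℝ).1 (i : ℝ × ℝ × ℝ).2.1)
      = ENNReal.ofReal (∑ i ∈ s, ((i : ℝ × ℝ × ℝ).2.1 - (i : ℝ × ℝ × ℝ).1)) := by
        rw [ENNReal.ofReal_sum_of_nonneg (fun i _ => hlen i)]
        exact Finset.sum_congr rfl fun i _ => hvol i
    _ ≤ (ε' : ℝ≥0∞) := by
        rw [← ENNReal.ofReal_coe_nnreal]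
        refine ENNReal.ofReal_le_ofReal ?_
        -- the key real estimate via Saks–Henstock
        set rel : ℝ × ℝ × ℝ → ℝ × ℝ × ℝ → Prop := fun e e' => e.1 ≤ e'.1 with hrel
        letI : DecidableRel rel := fun _ _ => Real.decidableLE _ _
        haveI htot : IsTotal _ rel := ⟨fun _ _ => le_total _ _⟩
        haveI htrans : IsTrans _ rel := ⟨fun _ _ _ => le_trans⟩
        set l₀ : List (ℝ × ℝ × ℝ) := s.toList.map Subtype.val with hl₀
        set l : List (ℝ × ℝ × ℝ) := l₀.insertionSort rel with hl
        have hperm : l.Perm l₀ := List.perm_insertionSort rel l₀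
        have hmem : ∀ e ∈ l, e ∈ T := by
          intro e he
          rw [hperm.mem_iff, hl₀, List.mem_map] at he
          obtain ⟨i, _, rfl⟩ := he
          exact hUT i.2
        have hnodup : l₀.Nodup := (Finset.nodup_toList s).map Subtype.val_injective
        have hdisj : l.Pairwise (fun e e' => Disjoint (Icc e.1 e.2.1) (Icc e'.1 e'.2.1)) := by
          rw [hperm.pairwise_iff (fun h => Disjoint.symm h)]
          refine List.Pairwise.imp_of_mem ?_ hnodup
          intro e e' he he' hne
          rw [hl₀, List.mem_map] at he he'
          obtain ⟨i, _, rfl⟩ := he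
          obtain ⟨i', _, rfl⟩ := he'
          exact hUd i.2 i'.2 hne
        have hsort : l.Pairwise rel := List.pairwise_insertionSort rel l₀
        have hbefore : l.Pairwise (fun e e' => e.2.1 ≤ e'.1) := by
          refine List.Pairwise.imp_of_mem ?_ (hsort.and hdisj)
          rintro e e' he he' ⟨hle, hdis⟩
          have h5' : e'.1 < e'.2.1 := (hmem e' he').2.2.2.2.1
          by_contra hlt
          push_neg at hlt
          exact Set.disjoint_left.mp hdis ⟨hle, hlt.le⟩ ⟨le_refl _, h5'.le⟩
        have hOK : SysOK δ b a l :=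
          sorted_to_sysOK (fun e he => ⟨(hmem e he).2.1, (hmem e he).2.2.2.2.1,
            ⟨(hmem e he).2.2.1, (hmem e he).2.2.2.1⟩, (hmem e he).2.2.2.2.2.2.1,
            (hmem e he).2.2.2.2.2.1⟩) hbefore
        have hSH : (l.map fun e => |sysTerm f F e|).sum ≤ 2 * ε₀ :=
          saks_henstock_abs hab hδ hF hδprop l hOK
        have hsum_eq : ∑ i ∈ s, ((i : ℝ × ℝ × ℝ).2.1 - (i : ℝ × ℝ × ℝ).1)
            = (l.map fun e => e.2.1 - e.1).sum := by
          rw [(hperm.map fun e => e.2.1 - e.1).sum_eq, hl₀, List.map_map]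
          exact (Finset.sum_map_toList s _).symm
        rw [hsum_eq]
        calc (l.map fun e => e.2.1 - e.1).sum
            ≤ (l.map fun e => ((k:ℝ) + 1) * |sysTerm f F e|).sum := by
              refine list_sum_le _ _ l ?_
              intro e he
              have hest := (hmem e he).2.2.2.2.2.2.2
              rw [div_le_iff₀ hk1] at hest
              calc e.2.1 - e.1 ≤ |F e.2.1 - F e.1 - f e.2.2 * (e.2.1 - e.1)| * ((k:ℝ) + 1) :=
                    hest
                _ = ((k:ℝ) + 1) * |sysTerm f F e| := by
                    simp only [sysTerm]
                    ring_nf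
          _ = ((k:ℝ) + 1) * (l.map fun e => |sysTerm f F e|).sum := List.sum_map_mul_left _ _ _
          _ ≤ ((k:ℝ) + 1) * (2 * ε₀) := by
              exact mul_le_mul_of_nonneg_left hSH (by positivity)
          _ = (ε' : ℝ) := by
              rw [hε₀]
              field_simp


theorem not_deriv_mem_Ek {a b : ℝ} {f F : ℝ → ℝ} {x : ℝ} (hxI : x ∈ Icc a b)
    (hx : ¬ HasDerivWithinAt F (f x) (Icc a b) x) : ∃ k : ℕ, x ∈ Ek a b f F k := by
  rw [hasDerivWithinAt_iff_tendsto_slope, Metric.tendsto_nhds] at hx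
  push_neg at hx
  obtain ⟨ε, hε, hfreq⟩ := hx
  obtain ⟨k, hk⟩ := exists_nat_gt (1/ε)
  have hk1 : (0:ℝ) < (k:ℝ) + 1 := by positivity
  have hkε : 1/((k:ℝ)+1) ≤ ε := by
    rw [div_le_iff₀ hk1]
    rw [div_lt_iff₀ hε] at hk
    nlinarith
  refine ⟨k, hxI, ?_⟩
  intro r hr
  have hball : (Icc a b \ {x}) ∩ Metric.ball x r ∈ nhdsWithin x (Icc a b \ {x}) :=
    Filter.inter_mem self_mem_nhdsWithin (nhdsWithin_le_nhds (Metric.ball_mem_nhds x hr))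
  obtain ⟨y, hy1, hy2⟩ := (hfreq.and_eventually (Filter.eventually_of_mem hball
    (fun z hz => hz))).exists
  obtain ⟨⟨hyI, hyx⟩, hyr⟩ := hy2
  rw [Set.mem_singleton_iff] at hyx
  have hyx' : y - x ≠ 0 := sub_ne_zero.mpr hyx
  rw [Real.dist_eq] at hy1
  have hslope : slope F x y = (F y - F x) / (y - x) := slope_def_field F x y
  have key : ε * |y - x| ≤ |F y - F x - f x * (y - x)| := by
    have heq : F y - F x - f x * (y - x) = (slope F x y - f x) * (y - x) := by
      rw [hslope]
      field_simp
    rw [heq, abs_mul]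
    exact mul_le_mul_of_nonneg_right hy1 (abs_nonneg _)
  have hyr' : |y - x| < r := by
    rw [← Real.dist_eq]
    exact Metric.mem_ball.mp hyr
  rcases lt_or_gt_of_ne hyx with hlt | hgt
  · -- y < x : use [y, x]
    refine ⟨y, x, hyI.1, hlt.le, le_refl x, hxI.2, hlt, ?_, ?_⟩
    · rw [abs_of_neg (by linarith : y - x < 0)] at hyr'
      linarith
    · have heq2 : F x - F y - f x * (x - y) = -(F y - F x - f x * (y - x)) := by ring
      rw [heq2, abs_neg]
      have habs : |y - x| = x - y := by rw [abs_of_neg (by linarith : y - x < 0)]; ring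
      calc (x - y) / ((k:ℝ) + 1) = (x - y) * (1/((k:ℝ)+1)) := by ring
        _ ≤ (x - y) * ε := mul_le_mul_of_nonneg_left hkε (by linarith)
        _ = ε * |y - x| := by rw [habs]; ring
        _ ≤ _ := key
  · -- x < y : use [x, y]
    refine ⟨x, y, hxI.1, le_refl x, hgt.le, hyI.2, hgt, ?_, ?_⟩
    · rw [abs_of_pos (by linarith : 0 < y - x)] at hyr'
      linarith
    · have habs : |y - x| = y - x := abs_of_pos (by linarith)
      calc (y - x) / ((k:ℝ) + 1) = (y - x) * (1/((k:ℝ)+1)) := by ring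
        _ ≤ (y - x) * ε := mul_le_mul_of_nonneg_left hkε (by linarith)
        _ = ε * |y - x| := by rw [habs]; ring
        _ ≤ _ := key

end HKaux

/-- The indefinite HK integral `F x = ∫_a^x f` of an HK integrable function is
differentiable with derivative `f x` at almost every `x ∈ [a,b]`. -/
theorem hk_indefinite_integral_ae_deriv (a b : ℝ) (hab : a ≤ b) (f F : ℝ → ℝ)
    (hF : ∀ x ∈ Set.Icc a b, HKIntegral a x f (F x)) :
    ∀ᵐ x ∂(MeasureTheory.volume.restrict (Set.Icc a b)),
      HasDerivWithinAt F (f x) (Set.Icc a b) x := by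
  rw [MeasureTheory.ae_iff, MeasureTheory.Measure.restrict_apply' measurableSet_Icc]
  refine MeasureTheory.measure_mono_null ?_
    (MeasureTheory.measure_iUnion_null fun k => HKaux.Ek_null hab hF k)
  rintro x ⟨hx1, hx2⟩
  exact Set.mem_iUnion.mpr (HKaux.not_deriv_mem_Ek hx2 hx1)
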